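/- For any real numbers S, S' with 0 < S ≤ S' ≤ 2S, the minimum over Δ ≥ 0 of max{1 + 2nΔ/S, (2nΔ + 2S)/(2nΔ + S')} (for any fixed n ≥ 1, with the substitution x = 2nΔ ≥ 0) equals 1 + (−a + √(a² − 4a + 8))/2 where a = S'/S, and this minimum is attained when the two terms inside the max are equal. -/

import Mathlib

open Set

/-- For `0 < S ≤ S' ≤ 2S` and fixed `n ≥ 1`, the minimum over `Δ ≥ 0` of
`max{1 + 2nΔ/S, (2nΔ + 2S)/(2nΔ + S')}` equals `1 + (−a + √(a² − 4a + 8))/2` with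
`a = S'/S`, attained where the two terms are equal. -/
theorem stmt_5 (S S' : ℝ) (hS : 0 < S) (h1 : S ≤ S') (h2 : S' ≤ 2 * S)
    (n : ℕ) (hn : 1 ≤ n) :
    IsLeast
      ((fun Δ : ℝ => max (1 + 2 * n * Δ / S) ((2 * n * Δ + 2 * S) / (2 * n * Δ + S'))) ''
        Ici 0)
      (1 + (-(S' / S) + Real.sqrt ((S' / S) ^ 2 - 4 * (S' / S) + 8)) / 2) ∧
    ∃ Δ : ℝ, 0 ≤ Δ ∧
      1 + 2 * n * Δ / S = (2 * n * Δ + 2 * S) / (2 * n * Δ + S') ∧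
      max (1 + 2 * n * Δ / S) ((2 * n * Δ + 2 * S) / (2 * n * Δ + S')) =
        1 + (-(S' / S) + Real.sqrt ((S' / S) ^ 2 - 4 * (S' / S) + 8)) / 2 := by
  have hn1 : (1:ℝ) ≤ (n:ℝ) := by exact_mod_cast hn
  have hn0 : (0:ℝ) < 2 * (n:ℝ) := by linarith
  have hS0 : S ≠ 0 := ne_of_gt hS
  set a := S' / S with ha
  have hS' : S' = a * S := by rw [ha, div_mul_cancel₀ S' hS0]
  have ha1 : 1 ≤ a := (le_div_iff₀ hS).mpr (by linarith)
  have ha2 : a ≤ 2 := (div_le_iff₀ hS).mpr (by linarith)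
  have hdisc : (0:ℝ) ≤ a ^ 2 - 4 * a + 8 := by nlinarith [sq_nonneg (a - 2)]
  have hs0 : 0 ≤ Real.sqrt (a ^ 2 - 4 * a + 8) := Real.sqrt_nonneg _
  have hs2 : Real.sqrt (a ^ 2 - 4 * a + 8) ^ 2 = a ^ 2 - 4 * a + 8 :=
    Real.sq_sqrt hdisc
  have hsa : a ≤ Real.sqrt (a ^ 2 - 4 * a + 8) := by
    nlinarith [hs2, hs0]
  set t := (-a + Real.sqrt (a ^ 2 - 4 * a + 8)) / 2 with htdef
  have ht0 : 0 ≤ t := by rw [htdef]; linarith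
  have hkey : (1 + t) * (t + a) = t + 2 := by
    rw [htdef]; nlinarith [hs2]
  have hta : 0 < t + a := by linarith
  set Δ₀ := t * S / (2 * n) with hΔ₀
  have hΔ₀0 : 0 ≤ Δ₀ := div_nonneg (mul_nonneg ht0 hS.le) hn0.le
  have hx : 2 * (n:ℝ) * Δ₀ = t * S := by
    rw [hΔ₀]; field_simp
  have heq1 : 1 + 2 * (n:ℝ) * Δ₀ / S = 1 + t := by
    rw [hx, mul_div_assoc, div_self hS0, mul_one]
  have hden : 2 * (n:ℝ) * Δ₀ + S' ≠ 0 := by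
    rw [hx, hS']; nlinarith
  have heq2 : (2 * (n:ℝ) * Δ₀ + 2 * S) / (2 * (n:ℝ) * Δ₀ + S') = 1 + t := by
    have hden2 : t * S + a * S ≠ 0 := ne_of_gt (by nlinarith)
    rw [hx, hS', div_eq_iff hden2]
    linear_combination (-S) * hkey
  -- lower bound
  have hlb : ∀ Δ : ℝ, 0 ≤ Δ →
      1 + t ≤ max (1 + 2 * n * Δ / S) ((2 * n * Δ + 2 * S) / (2 * n * Δ + S')) := by
    intro Δ hΔ
    set u := 2 * (n:ℝ) * Δ / S with hu
    have hu0 : 0 ≤ u := by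
      apply div_nonneg _ hS.le
      positivity
    have hxu : 2 * (n:ℝ) * Δ = u * S := by rw [hu]; field_simp
    rcases le_or_gt t u with h | h
    · exact le_max_of_le_left (by linarith)
    · apply le_max_of_le_right
      rw [hxu, hS']
      rw [le_div_iff₀ (by nlinarith)]
      have h3 : 0 ≤ S * (t * (t - u)) :=
        mul_nonneg hS.le (mul_nonneg ht0 (by linarith))
      have hkey' : S * ((1 + t) * (t + a)) = S * (t + 2) := by rw [hkey]
      have hid : u * S + 2 * S - (1 + t) * (u * S + a * S) =
          S * (t * (t - u)) - (S * ((1 + t) * (t + a)) - S * (t + 2)) := by ring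
      linarith [hid, h3, hkey']
  constructor
  · constructor
    · exact ⟨Δ₀, hΔ₀0, by simp only [heq1, heq2, max_self]⟩
    · rintro v ⟨Δ, hΔ, rfl⟩
      exact hlb Δ hΔ
  · exact ⟨Δ₀, hΔ₀0, heq1.trans heq2.symm, by simp only [heq1, heq2, max_self]⟩
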